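/- If c_{j+1} = deg r_j - (deg u_j - 1) ≥ 0 in the EEA with inputs x^{d-1} and S(x), then deg u_j ≤ ⌊(d-1)/2⌋. -/

import Mathlib

open Polynomial

/-- If `c_{j+1} = deg r_j - (deg u_j - 1) ≥ 0` in the EEA with inputs
`x^{d-1}` and `S(x)`, then `deg u_j ≤ ⌊(d-1)/2⌋`, for any `j ≥ 1` with `r_j, r_{j+1}`
nonzero.  (Lean index shift by one; `(d-1)/2` is natural floor division.) -/
theorem stmt4 (F : Type*) [Field F] (d : ℕ) (hd : 2 ≤ d)
    (S : Polynomial F) (hS0 : S ≠ 0) (hS : S.natDegree < d - 1)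
    (r q u : ℕ → Polynomial F)
    (hr0 : r 0 = (X : Polynomial F) ^ (d - 1)) (hr1 : r 1 = S)
    (hrrec : ∀ j, r (j + 2) = r j - q (j + 1) * r (j + 1))
    (hu0 : u 0 = 0) (hu1 : u 1 = 1)
    (hurec : ∀ j, u (j + 2) = u j - q (j + 1) * u (j + 1))
    (hq1 : ∀ j, r (j + 2) ≠ 0 → 1 ≤ (q (j + 1)).natDegree)
    (hlt : ∀ j, r (j + 2) ≠ 0 → (r (j + 2)).natDegree < (r (j + 1)).natDegree)
    (hqdeg : ∀ j, r (j + 1) ≠ 0 →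
      (q (j + 1)).natDegree + (r (j + 1)).natDegree = (r j).natDegree) :
    ∀ j, 1 ≤ j → r (j + 1) ≠ 0 → r (j + 2) ≠ 0 →
      0 ≤ ((r (j + 1)).natDegree : ℤ) - (((u (j + 1)).natDegree : ℤ) - 1) →
      (u (j + 1)).natDegree ≤ (d - 1) / 2 := by
  -- key invariant
  have key : ∀ j, 1 ≤ j → r j ≠ 0 → r (j + 1) ≠ 0 →
      u (j + 1) ≠ 0 ∧ (u j).natDegree < (u (j + 1)).natDegree ∧
      (u (j + 1)).natDegree + (r j).natDegree = d - 1 := by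
    intro j hj
    induction j, hj using Nat.le_induction with
    | base =>
      intro _ h2
      have hq := hq1 0 h2
      have hq0 : q 1 ≠ 0 := by
        intro h; rw [h] at hq; simp at hq
      have hd1 := hqdeg 0 (by rw [hr1]; exact hS0)
      simp only [zero_add] at hd1
      have hu2 : u 2 = - (q 1) := by
        have := hurec 0; rw [hu0, hu1] at this; simpa using this
      refine ⟨by rw [hu2]; simpa using hq0, ?_, ?_⟩
      · rw [hu1, hu2, natDegree_neg, natDegree_one]; exact hq
      · rw [hu2, natDegree_neg, hr1]
        rw [hr1, hr0] at hd1
        rw [natDegree_X_pow] at hd1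
        omega
    | succ n hn ih =>
      intro hn1 hn2
      have hqd1 := hq1 n hn2
      have hqd := hqdeg n hn1
      have hq0 : q (n + 1) ≠ 0 := by
        intro h; rw [h] at hqd1; simp at hqd1
      have hrn : r n ≠ 0 := by
        intro h; rw [h, natDegree_zero] at hqd; omega
      obtain ⟨hune, hult, hsum⟩ := ih hrn hn1
      have hun1 : u (n + 1) ≠ 0 := by
        intro h; rw [h, natDegree_zero] at hult; omega
      have hmul : (q (n + 1) * u (n + 1)).natDegree
          = (q (n + 1)).natDegree + (u (n + 1)).natDegree :=
        natDegree_mul hq0 hun1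
      have hltdeg : (u n).natDegree < (q (n + 1) * u (n + 1)).natDegree := by
        rw [hmul]; omega
      have hdeq : (u (n + 2)).natDegree = (q (n + 1) * u (n + 1)).natDegree := by
        rw [hurec n]
        exact natDegree_sub_eq_right_of_natDegree_lt hltdeg
      refine ⟨?_, ?_, ?_⟩
      · intro h
        rw [hurec n, sub_eq_zero] at h
        rw [h] at hltdeg; omega
      · rw [hdeq, hmul]; omega
      · rw [hdeq, hmul]; omega
  intro j hj h1 h2 hc
  -- derive r j ≠ 0
  have hqd1 := hq1 j h2
  have hqd := hqdeg j h1
  have hrj : r j ≠ 0 := by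
    intro h; rw [h, natDegree_zero] at hqd; omega
  obtain ⟨_, _, hsum⟩ := key j hj hrj h1
  obtain ⟨k, rfl⟩ : ∃ k, j = k + 1 := ⟨j - 1, by omega⟩
  have hdec := hlt k (by simpa using h1)
  omega
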